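/- Let G_x and G_y be two graphs with loops on a common finite vertex set S, each with minimum degree at least 1. Then there exists a set D ⊆ S that is a dominated set in both G_x and G_y with |D| ≥ |S|/3. -/

import Mathlib

open Finset

def IsSF {V : Type*} (adj : V → V → Prop) (c : V → Option V) : Prop :=
  ∀ v w, c v = some w → adj v w ∧ c w = none

noncomputable def coveredSF {V : Type*} [Fintype V] (c : V → Option V) : Finset V := by
  classical exact univ.filter (fun v => (c v).isSome ∨ ∃ u, c u = some v)

lemma mem_coveredSF {V : Type*} [Fintype V] (c : V → Option V) (v : V) :
    v ∈ coveredSF c ↔ (c v).isSome ∨ ∃ u, c u = some v := by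
  classical simp [coveredSF]

lemma exists_forest {V : Type*} [Fintype V] (adj : V → V → Prop)
    (hsymm : ∀ u v, adj u v → adj v u) (hmin : ∀ v, ∃ u, adj v u) :
    ∃ c : V → Option V, IsSF adj c ∧ ∀ v, ¬ adj v v → v ∈ coveredSF c := by
  classical
  obtain ⟨c, hcmem, hmax⟩ := Finset.exists_max_image
    (univ.filter (fun c : V → Option V => IsSF adj c)) (fun c => (coveredSF c).card)
    ⟨(fun _ => none), by rw [mem_filter]; exact ⟨mem_univ _, by simp [IsSF]⟩⟩
  have hcSF : IsSF adj c := (mem_filter.mp hcmem).2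
  refine ⟨c, hcSF, ?_⟩
  intro t ht
  by_contra htc
  rw [mem_coveredSF] at htc
  push_neg at htc
  obtain ⟨hct, hnoleaf⟩ := htc
  have hct : c t = none := by
    cases h : c t with
    | none => rfl
    | some w => rw [h] at hct; simp at hct
  obtain ⟨u, hu⟩ := hmin t
  have hut : u ≠ t := fun h => ht (h ▸ hu)
  -- In each case we construct a strictly better forest c', contradicting maximality.
  have key : ∀ c' : V → Option V, IsSF adj c' → coveredSF c ⊆ coveredSF c' →
      t ∈ coveredSF c' → False := by
    intro c' hSF' hsub ht'
    have h1 : coveredSF c ⊂ coveredSF c' := by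
      refine Finset.ssubset_iff_of_subset hsub |>.mpr ⟨t, ht', ?_⟩
      rw [mem_coveredSF]; push_neg
      exact ⟨by simp [hct], hnoleaf⟩
    have h2 := Finset.card_lt_card h1
    have h3 := hmax c' (mem_filter.mpr ⟨mem_univ _, hSF'⟩)
    omega
  cases hcu : c u with
  | none =>
    -- attach t as a new leaf of u
    set c' : V → Option V := Function.update c t (some u) with hc'
    have hc'eq : ∀ v, v ≠ t → c' v = c v := fun v hv => Function.update_of_ne hv _ _
    have hc't : c' t = some u := Function.update_self _ _ _
    refine key c' ?_ ?_ ?_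
    · intro v w hvw
      by_cases hvt : v = t
      · subst hvt
        rw [hc't] at hvw
        obtain rfl : w = u := (Option.some.inj hvw).symm
        exact ⟨hu, by rw [hc'eq _ hut, hcu]⟩
      · rw [hc'eq v hvt] at hvw
        obtain ⟨ha, hn⟩ := hcSF v w hvw
        have hwt : w ≠ t := fun h => hnoleaf v (h ▸ hvw)
        exact ⟨ha, by rw [hc'eq w hwt, hn]⟩
    · intro x hxc
      rw [mem_coveredSF] at hxc ⊢
      rcases hxc with hs | ⟨z, hz⟩
      · left
        have hxt : x ≠ t := fun h => by rw [h, hct] at hs; simp at hs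
        rwa [hc'eq x hxt]
      · right
        have hzt : z ≠ t := fun h => by rw [h, hct] at hz; simp at hz
        exact ⟨z, by rwa [hc'eq z hzt]⟩
    · rw [mem_coveredSF]; left; rw [hc't]; simp
  | some w =>
    obtain ⟨huw, hcw⟩ := hcSF u w hcu
    have hwt : w ≠ t := fun h => hnoleaf u (h ▸ hcu)
    have hwu : w ≠ u := fun h => by rw [h, hcu] at hcw; simp at hcw
    by_cases hex : ∃ u', u' ≠ u ∧ c u' = some w
    · -- u has a sibling leaf u' on w; steal u to be a center for t
      obtain ⟨u', hu'u, hu'⟩ := hex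
      have hu't : u' ≠ t := fun h => by rw [h, hct] at hu'; simp at hu'
      set c' : V → Option V := fun v => if v = t then some u else if v = u then none else c v
        with hc'
      have hc't : c' t = some u := by simp [hc']
      have hc'u : c' u = none := by simp [hc', hut]
      have hc'eq : ∀ v, v ≠ t → v ≠ u → c' v = c v := by
        intro v h1 h2; simp [hc', h1, h2]
      refine key c' ?_ ?_ ?_
      · intro v z hvz
        by_cases hvt : v = t
        · subst hvt
          rw [hc't] at hvz
          obtain rfl : z = u := (Option.some.inj hvz).symm
          exact ⟨hu, hc'u⟩
        · by_cases hvu : v = u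
          · subst hvu; rw [hc'u] at hvz; simp at hvz
          · rw [hc'eq v hvt hvu] at hvz
            obtain ⟨ha, hn⟩ := hcSF v z hvz
            have hzt : z ≠ t := fun h => hnoleaf v (h ▸ hvz)
            refine ⟨ha, ?_⟩
            by_cases hzu : z = u
            · rw [hzu]; exact hc'u
            · rw [hc'eq z hzt hzu, hn]
      · intro x hxc
        rw [mem_coveredSF] at hxc ⊢
        rcases hxc with hs | ⟨z, hz⟩
        · have hxt : x ≠ t := fun h => by rw [h, hct] at hs; simp at hs
          by_cases hxu : x = u
          · right; exact ⟨t, by rw [hc't, hxu]⟩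
          · left; rwa [hc'eq x hxt hxu]
        · have hzt : z ≠ t := fun h => by rw [h, hct] at hz; simp at hz
          by_cases hzu : z = u
          · -- x = w; use the sibling u'
            obtain rfl : x = w := by rw [hzu, hcu] at hz; exact (Option.some.inj hz).symm
            right; exact ⟨u', by rw [hc'eq u' hu't hu'u]; exact hu'⟩
          · right; exact ⟨z, by rwa [hc'eq z hzt hzu]⟩
      · rw [mem_coveredSF]; left; rw [hc't]; simp
    · -- u is the unique leaf of w; re-center the star at u, adding leaves t and w
      push_neg at hex
      set c' : V → Option V :=
        fun v => if v = t then some u else if v = u then none else if v = w then some u else c v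
        with hc'
      have hc't : c' t = some u := by simp [hc']
      have hc'u : c' u = none := by simp [hc', hut]
      have hc'w : c' w = some u := by simp [hc', hwt, hwu]
      have hc'eq : ∀ v, v ≠ t → v ≠ u → v ≠ w → c' v = c v := by
        intro v h1 h2 h3; simp [hc', h1, h2, h3]
      refine key c' ?_ ?_ ?_
      · intro v z hvz
        by_cases hvt : v = t
        · subst hvt; rw [hc't] at hvz
          obtain rfl : z = u := (Option.some.inj hvz).symm
          exact ⟨hu, hc'u⟩
        · by_cases hvu : v = u
          · subst hvu; rw [hc'u] at hvz; simp at hvz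
          · by_cases hvw : v = w
            · subst hvw; rw [hc'w] at hvz
              obtain rfl : z = u := (Option.some.inj hvz).symm
              exact ⟨hsymm _ _ huw, hc'u⟩
            · rw [hc'eq v hvt hvu hvw] at hvz
              obtain ⟨ha, hn⟩ := hcSF v z hvz
              have hzt : z ≠ t := fun h => hnoleaf v (h ▸ hvz)
              have hzw : z ≠ w := fun h => hex v hvu (h ▸ hvz)
              refine ⟨ha, ?_⟩
              by_cases hzu : z = u
              · rw [hzu]; exact hc'u
              · rw [hc'eq z hzt hzu hzw, hn]
      · intro x hxc
        rw [mem_coveredSF] at hxc ⊢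
        rcases hxc with hs | ⟨z, hz⟩
        · have hxt : x ≠ t := fun h => by rw [h, hct] at hs; simp at hs
          by_cases hxu : x = u
          · right; exact ⟨t, by rw [hc't, hxu]⟩
          · by_cases hxw : x = w
            · exfalso; rw [hxw, hcw] at hs; simp at hs
            · left; rwa [hc'eq x hxt hxu hxw]
        · have hzt : z ≠ t := fun h => by rw [h, hct] at hz; simp at hz
          by_cases hzu : z = u
          · obtain rfl : x = w := by rw [hzu, hcu] at hz; exact (Option.some.inj hz).symm
            left; rw [hc'w]; simp
          · by_cases hzw : z = w
            · rw [hzw, hcw] at hz; simp at hz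
            · right; exact ⟨z, by rwa [hc'eq z hzt hzu hzw]⟩
      · rw [mem_coveredSF]; left; rw [hc't]; simp

/-- Union of two star forests (given by partial "center of my star" maps) has an
independent subset of `A` of size ≥ |A|/3. -/
lemma forest_indep {V : Type*} [DecidableEq V] (cx cy : V → Option V)
    (hx : ∀ v w, cx v = some w → cx w = none)
    (hy : ∀ v w, cy v = some w → cy w = none) :
    ∀ (n : ℕ) (A : Finset V), A.card ≤ n → ∃ D ⊆ A,
      (∀ v ∈ D, ∀ w ∈ D, cx v ≠ some w ∧ cy v ≠ some w) ∧ A.card ≤ 3 * D.card := by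
  classical
  intro n
  induction n with
  | zero =>
    intro A hA
    exact ⟨∅, by simp, by simp, by omega⟩
  | succ n ih =>
    intro A hA
    by_cases hcase : ∃ v ∈ A, (¬ ∃ u ∈ A, cx u = some v) ∧ (¬ ∃ u ∈ A, cy u = some v)
    · obtain ⟨v, hvA, hnx, hny⟩ := hcase
      -- remove v and its (at most two) centers
      set R : Finset V := insert v ((cx v).elim ∅ (fun w => {w}) ∪ (cy v).elim ∅ (fun w => {w})) with hR
      have hvR : v ∈ R := mem_insert_self _ _
      have hRcard : R.card ≤ 3 := by
        apply le_trans (card_insert_le _ _)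
        have h1 : ((cx v).elim ∅ (fun w => ({w} : Finset V))).card ≤ 1 := by
          cases cx v <;> simp
        have h2 : ((cy v).elim ∅ (fun w => ({w} : Finset V))).card ≤ 1 := by
          cases cy v <;> simp
        have := card_union_le ((cx v).elim ∅ (fun w => ({w} : Finset V)))
          ((cy v).elim ∅ (fun w => ({w} : Finset V)))
        omega
      have hsub : A \ R ⊂ A := by
        apply ssubset_iff_of_subset (sdiff_subset) |>.mpr
        exact ⟨v, hvA, by simp [hvR]⟩
      have hcard' : (A \ R).card ≤ n := by
        have h1 : (A \ R).card < A.card := card_lt_card hsub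
        omega
      obtain ⟨D', hD'sub, hD'ind, hD'card⟩ := ih (A \ R) hcard'
      have hvD' : v ∉ D' := fun h => (mem_sdiff.mp (hD'sub h)).2 hvR
      refine ⟨insert v D', ?_, ?_, ?_⟩
      · intro x hx'
        rcases mem_insert.mp hx' with rfl | hx'
        · exact hvA
        · exact (sdiff_subset) (hD'sub hx')
      · intro p hp q hq
        rcases mem_insert.mp hp with rfl | hp2
        · rcases mem_insert.mp hq with rfl | hq2
          · constructor
            · intro h; have := hx _ _ h; rw [this] at h; simp at h
            · intro h; have := hy _ _ h; rw [this] at h; simp at h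
          · -- p = v, q ∈ D' ⊆ A \ R : centers of v are in R
            constructor
            · intro h
              have hqR : q ∈ R := by
                rw [hR]; apply mem_insert_of_mem; apply mem_union_left; rw [h]; simp
              exact (mem_sdiff.mp (hD'sub hq2)).2 hqR
            · intro h
              have hqR : q ∈ R := by
                rw [hR]; apply mem_insert_of_mem; apply mem_union_right; rw [h]; simp
              exact (mem_sdiff.mp (hD'sub hq2)).2 hqR
        · rcases mem_insert.mp hq with rfl | hq2
          · -- p ∈ D', q = v : v is not a relative center
            constructor
            · intro h; exact hnx ⟨p, (sdiff_subset) (hD'sub hp2), h⟩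
            · intro h; exact hny ⟨p, (sdiff_subset) (hD'sub hp2), h⟩
          · exact hD'ind p hp2 q hq2
      · have h1 : A.card ≤ (A \ R).card + R.card := card_le_card_sdiff_add_card
        rw [card_insert_of_notMem hvD']
        omega
    · -- every vertex of A is a relative center in one of the forests
      set Ax : Finset V := A.filter (fun v => ∃ u ∈ A, cx u = some v) with hAx
      set Ay : Finset V := A.filter (fun v => ∃ u ∈ A, cy u = some v) with hAy
      have hcover : A ⊆ Ax ∪ Ay := by
        intro v hv
        by_cases hxc : ∃ u ∈ A, cx u = some v
        · exact mem_union_left _ (mem_filter.mpr ⟨hv, hxc⟩)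
        · by_cases hyc : ∃ u ∈ A, cy u = some v
          · exact mem_union_right _ (mem_filter.mpr ⟨hv, hyc⟩)
          · exact absurd ⟨v, hv, hxc, hyc⟩ hcase
      have hxnone : ∀ v ∈ Ax, cx v = none := by
        intro v hv; obtain ⟨u, _, hu⟩ := (mem_filter.mp hv).2; exact hx u v hu
      have hynone : ∀ v ∈ Ay, cy v = none := by
        intro v hv; obtain ⟨u, _, hu⟩ := (mem_filter.mp hv).2; exact hy u v hu
      -- y-edges inside A land in Ay; x-edges land in Ax
      have hedgey : ∀ v ∈ A, ∀ w, cy v = some w → w ∈ A → w ∈ Ay := by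
        intro v hv w hw hwA; exact mem_filter.mpr ⟨hwA, v, hv, hw⟩
      have hedgex : ∀ v ∈ A, ∀ w, cx v = some w → w ∈ A → w ∈ Ax := by
        intro v hv w hw hwA; exact mem_filter.mpr ⟨hwA, v, hv, hw⟩
      -- three candidate independent sets
      have hind1 : ∀ v ∈ Ax \ Ay, ∀ w ∈ Ax \ Ay, cx v ≠ some w ∧ cy v ≠ some w := by
        intro v hv w hw
        have hvx := hxnone v (mem_sdiff.mp hv).1
        constructor
        · rw [hvx]; simp
        · intro h
          have hvA : v ∈ A := (mem_filter.mp (mem_sdiff.mp hv).1).1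
          have hwA : w ∈ A := (mem_filter.mp (mem_sdiff.mp hw).1).1
          exact (mem_sdiff.mp hw).2 (hedgey v hvA w h hwA)
      have hind2 : ∀ v ∈ Ay \ Ax, ∀ w ∈ Ay \ Ax, cx v ≠ some w ∧ cy v ≠ some w := by
        intro v hv w hw
        have hvy := hynone v (mem_sdiff.mp hv).1
        constructor
        · intro h
          have hvA : v ∈ A := (mem_filter.mp (mem_sdiff.mp hv).1).1
          have hwA : w ∈ A := (mem_filter.mp (mem_sdiff.mp hw).1).1
          exact (mem_sdiff.mp hw).2 (hedgex v hvA w h hwA)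
        · rw [hvy]; simp
      have hind3 : ∀ v ∈ Ax ∩ Ay, ∀ w ∈ Ax ∩ Ay, cx v ≠ some w ∧ cy v ≠ some w := by
        intro v hv w hw
        have h1 := hxnone v (mem_inter.mp hv).1
        have h2 := hynone v (mem_inter.mp hv).2
        rw [h1, h2]
        simp
      -- counting
      have hc1 : (Ax \ Ay).card + (Ax ∩ Ay).card = Ax.card := card_sdiff_add_card_inter _ _
      have hc2 : (Ay \ Ax).card + (Ay ∩ Ax).card = Ay.card := card_sdiff_add_card_inter _ _
      have hc3 : (Ax ∪ Ay).card + (Ax ∩ Ay).card = Ax.card + Ay.card := card_union_add_card_inter _ _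
      have hc4 : A.card ≤ (Ax ∪ Ay).card := card_le_card hcover
      have hc5 : (Ay ∩ Ax).card = (Ax ∩ Ay).card := by rw [inter_comm]
      have hsum : A.card ≤ (Ax \ Ay).card + (Ay \ Ax).card + (Ax ∩ Ay).card := by omega
      have hsub1 : Ax \ Ay ⊆ A := fun x h => (mem_filter.mp (mem_sdiff.mp h).1).1
      have hsub2 : Ay \ Ax ⊆ A := fun x h => (mem_filter.mp (mem_sdiff.mp h).1).1
      have hsub3 : Ax ∩ Ay ⊆ A := fun x h => (mem_filter.mp (mem_inter.mp h).1).1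
      rcases le_total (Ax \ Ay).card (Ay \ Ax).card with h12 | h12
      · rcases le_total (Ay \ Ax).card (Ax ∩ Ay).card with h23 | h23
        · exact ⟨Ax ∩ Ay, hsub3, hind3, by omega⟩
        · exact ⟨Ay \ Ax, hsub2, hind2, by omega⟩
      · rcases le_total (Ax \ Ay).card (Ax ∩ Ay).card with h23 | h23
        · exact ⟨Ax ∩ Ay, hsub3, hind3, by omega⟩
        · exact ⟨Ax \ Ay, hsub1, hind1, by omega⟩

open Finset

/-- `D` is a dominated set in the graph-with-loops `adj`: every vertex of `D`
has a loop or a neighbor outside `D`. -/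
def DominatedSet {V : Type*} (adj : V → V → Prop) (D : Finset V) : Prop :=
  ∀ v ∈ D, adj v v ∨ ∃ u, u ∉ D ∧ adj v u

/-- Two graphs with loops on a common finite vertex set, each of minimum degree
at least 1 (i.e. every vertex has a loop or a neighbor), have a common dominated
set of size at least a third of the vertex set. -/
theorem stmt2 {V : Type*} [Fintype V]
    (adjx adjy : V → V → Prop)
    (hsymmx : ∀ u v, adjx u v → adjx v u)
    (hsymmy : ∀ u v, adjy u v → adjy v u)
    (hminx : ∀ v, ∃ u, adjx v u)
    (hminy : ∀ v, ∃ u, adjy v u) :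
    ∃ D : Finset V, DominatedSet adjx D ∧ DominatedSet adjy D ∧
      (Fintype.card V : ℝ) / 3 ≤ (D.card : ℝ) := by
  classical
  obtain ⟨cx, hcx, hcovx⟩ := exists_forest adjx hsymmx hminx
  obtain ⟨cy, hcy, hcovy⟩ := exists_forest adjy hsymmy hminy
  obtain ⟨D, -, hind, hcard⟩ := forest_indep cx cy
    (fun v w h => (hcx v w h).2) (fun v w h => (hcy v w h).2)
    (univ : Finset V).card univ le_rfl
  refine ⟨D, ?_, ?_, ?_⟩
  · intro v hv
    by_cases hloop : adjx v v
    · exact Or.inl hloop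
    · right
      have hvcov := hcovx v hloop
      rw [mem_coveredSF] at hvcov
      rcases hvcov with hs | ⟨u, hu⟩
      · obtain ⟨w, hw⟩ := Option.isSome_iff_exists.mp hs
        refine ⟨w, fun hwD => (hind v hv w hwD).1 hw, (hcx v w hw).1⟩
      · refine ⟨u, fun huD => (hind u huD v hv).1 hu, hsymmx u v (hcx u v hu).1⟩
  · intro v hv
    by_cases hloop : adjy v v
    · exact Or.inl hloop
    · right
      have hvcov := hcovy v hloop
      rw [mem_coveredSF] at hvcov
      rcases hvcov with hs | ⟨u, hu⟩
      · obtain ⟨w, hw⟩ := Option.isSome_iff_exists.mp hs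
        refine ⟨w, fun hwD => (hind v hv w hwD).2 hw, (hcy v w hw).1⟩
      · refine ⟨u, fun huD => (hind u huD v hv).2 hu, hsymmy u v (hcy u v hu).1⟩
  · have h1 : Fintype.card V ≤ 3 * D.card := by
      rw [← card_univ]; exact hcard
    rw [div_le_iff₀ (by norm_num : (0:ℝ) < 3)]
    calc (Fintype.card V : ℝ) ≤ ((3 * D.card : ℕ) : ℝ) := by exact_mod_cast h1
      _ = (D.card : ℝ) * 3 := by push_cast; ring
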